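/- Let s, r, p, q' be four points lying on a common circle in the Euclidean plane (all at distance ρ > 0 from some center o), with r, p, s non-collinear, such that q' and s lie strictly on opposite sides of the line through r and p, and let α = ∠(r s p) satisfy α ≤ π/2. Then dist(r,q') + dist(q',p) ≤ dist(r,p)/cos(α/2). -/

import Mathlib

open EuclideanGeometry Real

private lemma ncol_ne {a b c : EuclideanSpace ℝ (Fin 2)}
    (h : ¬Collinear ℝ ({a, b, c} : Set (EuclideanSpace ℝ (Fin 2)))) :
    a ≠ b ∧ a ≠ c ∧ b ≠ c := by
  refine ⟨?_, ?_, ?_⟩ <;> rintro rfl <;> apply h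
  · rw [Set.insert_idem]; exact collinear_pair ℝ _ _
  · rw [Set.insert_comm, Set.pair_eq_singleton]; exact collinear_pair ℝ _ _
  · rw [Set.pair_eq_singleton]; exact collinear_pair ℝ _ _

private lemma abs_sin_toReal_aux (θ : Real.Angle) : |Real.sin θ.toReal| = Real.sin |θ.toReal| := by
  rcases le_or_gt 0 θ.toReal with h | h
  · rw [abs_of_nonneg h, abs_of_nonneg (Real.sin_nonneg_of_nonneg_of_le_pi h θ.toReal_le_pi)]
  · rw [abs_of_neg h, Real.sin_neg,
      abs_of_nonpos (Real.sin_nonpos_of_nonpos_of_neg_pi_le h.le θ.neg_pi_lt_toReal.le)]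

set_option maxHeartbeats 1000000 in
theorem stmt_6 (s r p q' o : EuclideanSpace ℝ (Fin 2)) (ρ α : ℝ)
    (hρ : 0 < ρ)
    (hs : dist o s = ρ) (hr : dist o r = ρ) (hp : dist o p = ρ) (hq' : dist o q' = ρ)
    (hncol : ¬ Collinear ℝ ({r, p, s} : Set (EuclideanSpace ℝ (Fin 2))))
    (hside : (affineSpan ℝ ({r, p} : Set (EuclideanSpace ℝ (Fin 2)))).SOppSide q' s)
    (hα : α = ∠ r s p) (hα2 : α ≤ π / 2) :
    dist r q' + dist q' p ≤ dist r p / Real.cos (α / 2) := by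
  haveI : Fact (Module.finrank ℝ (EuclideanSpace ℝ (Fin 2)) = 2) := ⟨finrank_euclideanSpace_fin⟩
  haveI : Module.Oriented ℝ (EuclideanSpace ℝ (Fin 2)) (Fin 2) :=
    ⟨Module.Basis.orientation (EuclideanSpace.basisFun (Fin 2) ℝ).toBasis⟩
  have hrS : r ∈ (⟨o, ρ⟩ : EuclideanGeometry.Sphere (EuclideanSpace ℝ (Fin 2))) := by
    rw [EuclideanGeometry.mem_sphere, dist_comm]; exact hr
  have hpS : p ∈ (⟨o, ρ⟩ : EuclideanGeometry.Sphere (EuclideanSpace ℝ (Fin 2))) := by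
    rw [EuclideanGeometry.mem_sphere, dist_comm]; exact hp
  have hsS : s ∈ (⟨o, ρ⟩ : EuclideanGeometry.Sphere (EuclideanSpace ℝ (Fin 2))) := by
    rw [EuclideanGeometry.mem_sphere, dist_comm]; exact hs
  have hq'S : q' ∈ (⟨o, ρ⟩ : EuclideanGeometry.Sphere (EuclideanSpace ℝ (Fin 2))) := by
    rw [EuclideanGeometry.mem_sphere, dist_comm]; exact hq'
  have hncol2 : ¬ Collinear ℝ ({r, s, p} : Set (EuclideanSpace ℝ (Fin 2))) := by
    have hsets : ({r, p, s} : Set (EuclideanSpace ℝ (Fin 2))) = {r, s, p} := by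
      ext x; constructor <;> (intro hx; simp only [Set.mem_insert_iff,
        Set.mem_singleton_iff] at hx ⊢; tauto)
    rwa [hsets] at hncol
  obtain ⟨hrs, hrp, hsp'⟩ := ncol_ne hncol2
  have hsr : s ≠ r := hrs.symm
  have hsp : s ≠ p := hsp'
  have hrmem : r ∈ affineSpan ℝ ({r, p} : Set (EuclideanSpace ℝ (Fin 2))) :=
    left_mem_affineSpan_pair ℝ r p
  have hpmem : p ∈ affineSpan ℝ ({r, p} : Set (EuclideanSpace ℝ (Fin 2))) :=
    right_mem_affineSpan_pair ℝ r p
  have hq'span := hside.left_notMem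
  have hq'r : q' ≠ r := fun h => hq'span (h ▸ hrmem)
  have hq'p : q' ≠ p := fun h => hq'span (h ▸ hpmem)
  have hncol4 : ¬ Collinear ℝ ({r, p, q'} : Set (EuclideanSpace ℝ (Fin 2))) := fun h =>
    hq'span (h.mem_affineSpan_of_mem_of_ne (by simp) (by simp) (by simp) hrp)
  have hncol5 : ¬ Collinear ℝ ({q', r, p} : Set (EuclideanSpace ℝ (Fin 2))) := fun h =>
    hq'span (h.mem_affineSpan_of_mem_of_ne (by simp) (by simp) (by simp) hrp)
  -- inscribed angle
  have h1 : (2 : ℤ) • ∡ r q' p = (2 : ℤ) • ∡ r s p :=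
    EuclideanGeometry.Sphere.two_zsmul_oangle_eq hrS hq'S hsS hpS hq'r hq'p hsr hsp
  have hsign : (∡ r s p).sign = -(∡ r q' p).sign :=
    hside.oangle_sign_eq_neg hrmem hpmem
  have hsignne : (∡ r s p).sign ≠ 0 := fun h =>
    hncol2 (EuclideanGeometry.oangle_sign_eq_zero_iff_collinear.1 h)
  have h2 : ∡ r q' p = ∡ r s p + ↑π := by
    rcases Real.Angle.two_zsmul_eq_iff.1 h1 with h | h
    · exfalso
      rw [h] at hsign
      generalize (∡ r s p).sign = a at hsign hsignne
      cases a with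
      | neg => exact absurd hsign (by decide)
      | zero => exact hsignne rfl
      | pos => exact absurd hsign (by decide)
    · exact h
  -- the unoriented angle at q' is π - α
  have hang : ∠ r q' p = π - α := by
    have hc : Real.cos (∠ r q' p) = Real.cos (π - α) := by
      rw [EuclideanGeometry.angle_eq_abs_oangle_toReal hq'r.symm hq'p.symm, Real.cos_abs,
        Real.Angle.cos_toReal, h2, Real.Angle.cos_add_pi, Real.cos_pi_sub, hα,
        EuclideanGeometry.angle_eq_abs_oangle_toReal hsr.symm hsp.symm, Real.cos_abs,
        Real.Angle.cos_toReal]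
    have h0 : 0 < α := hα ▸ EuclideanGeometry.angle_pos_of_not_collinear hncol2
    have hpi : α < π := hα ▸ EuclideanGeometry.angle_lt_pi_of_not_collinear hncol2
    exact Real.injOn_cos ⟨EuclideanGeometry.angle_nonneg _ _ _,
      EuclideanGeometry.angle_le_pi _ _ _⟩ ⟨by linarith, by linarith⟩ hc
  -- angle sum
  have hsum : ∠ q' r p + ∠ r p q' + ∠ p q' r = π :=
    EuclideanGeometry.angle_add_angle_add_angle_eq_pi p hq'r.symm
  have hsum2 : ∠ q' r p + ∠ r p q' = α := by
    rw [EuclideanGeometry.angle_comm p q' r, hang] at hsum; linarith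
  -- law of sines
  have habs : ∀ a b c : EuclideanSpace ℝ (Fin 2), a ≠ b → c ≠ b →
      |Real.Angle.sin (∡ a b c)| = Real.sin (∠ a b c) := by
    intro a b c hab hcb
    rw [EuclideanGeometry.angle_eq_abs_oangle_toReal hab hcb, ← Real.Angle.sin_toReal,
      abs_sin_toReal_aux]
  have e1 : dist r p = 2 * ρ * Real.sin (∠ r s p) := by
    have h := EuclideanGeometry.Sphere.dist_div_sin_oangle_eq_two_mul_radius hrS hsS hpS
      hsr.symm hrp hsp
    rw [habs r s p hsr.symm hsp.symm] at h
    have hne : Real.sin (∠ r s p) ≠ 0 := EuclideanGeometry.sin_ne_zero_of_not_collinear hncol2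
    have h' := (div_eq_iff hne).1 h
    rw [h']
  have e2 : dist r q' = 2 * ρ * Real.sin (∠ r p q') := by
    have h := EuclideanGeometry.Sphere.dist_div_sin_oangle_eq_two_mul_radius hrS hpS hq'S
      hrp hq'r.symm hq'p.symm
    rw [habs r p q' hrp hq'p] at h
    have hne : Real.sin (∠ r p q') ≠ 0 := EuclideanGeometry.sin_ne_zero_of_not_collinear hncol4
    have h' := (div_eq_iff hne).1 h
    rw [h']
  have e3 : dist q' p = 2 * ρ * Real.sin (∠ q' r p) := by
    have h := EuclideanGeometry.Sphere.dist_div_sin_oangle_eq_two_mul_radius hq'S hrS hpS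
      hq'r hq'p hrp
    rw [habs q' r p hq'r hrp.symm] at h
    have hne : Real.sin (∠ q' r p) ≠ 0 := EuclideanGeometry.sin_ne_zero_of_not_collinear hncol5
    have h' := (div_eq_iff hne).1 h
    rw [h']
  -- final computation
  have h0 : 0 < α := hα ▸ EuclideanGeometry.angle_pos_of_not_collinear hncol2
  have hpi : α < π := hα ▸ EuclideanGeometry.angle_lt_pi_of_not_collinear hncol2
  have hcpos : 0 < Real.cos (α / 2) :=
    Real.cos_pos_of_mem_Ioo ⟨by linarith [Real.pi_pos], by linarith⟩
  have hsinα : Real.sin α = 2 * Real.sin (α / 2) * Real.cos (α / 2) := by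
    rw [show α = 2 * (α / 2) by ring, Real.sin_two_mul]; ring
  set β := ∠ q' r p with hβ
  set γ := ∠ r p q' with hγ
  have hs2 : 0 ≤ Real.sin (α / 2) :=
    Real.sin_nonneg_of_nonneg_of_le_pi (by linarith) (by linarith [Real.pi_pos])
  have hsbound : Real.sin β + Real.sin γ ≤ 2 * Real.sin (α / 2) := by
    have hadd := Real.sin_sub_sin β (-γ)
    rw [Real.sin_neg, sub_neg_eq_add, show β - -γ = β + γ by ring,
      show β + -γ = β - γ by ring, show (β + γ) / 2 = α / 2 by rw [← hsum2]] at hadd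
    nlinarith [Real.cos_le_one ((β - γ) / 2)]
  rw [e1, e2, e3, ← hα, hsinα]
  have hrw : 2 * ρ * (2 * Real.sin (α / 2) * Real.cos (α / 2)) / Real.cos (α / 2)
      = 2 * ρ * (2 * Real.sin (α / 2)) := by
    field_simp
  rw [hrw]
  have hmul := mul_le_mul_of_nonneg_left hsbound (by positivity : (0:ℝ) ≤ 2 * ρ)
  ring_nf at hmul ⊢
  linarith
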